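/- Let G be a finite simple graph on n ≥ 3 vertices, and suppose G has an induced subgraph on k vertices that is a threshold graph. Then ρ_T(G) ≤ n − k + 1. -/
import Mathlib


/-- A min-plus `k`-tropical dot product representation of `G` with threshold `t`:
distinct vertices `x, y` are adjacent iff `min_{1 ≤ i ≤ k} (f(x)_i + f(y)_i) ≥ t`
(equivalently, every coordinate sum is at least `t`). -/
def MinPlusRep {V : Type*} (G : SimpleGraph V) (k : ℕ) (f : V → Fin k → ℝ) (t : ℝ) : Prop :=
  0 < t ∧ ∀ x y : V, x ≠ y → (G.Adj x y ↔ ∀ i : Fin k, t ≤ f x i + f y i)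

/-- The min-plus tropical dot product dimension `ρ_T(G)`. -/
noncomputable def rhoT {V : Type*} (G : SimpleGraph V) : ℕ :=
  sInf {k : ℕ | 0 < k ∧ ∃ (f : V → Fin k → ℝ) (t : ℝ), MinPlusRep G k f t}

/-- `G` is a threshold graph: there are vertex weights `w` and a threshold `t` such that
distinct vertices are adjacent iff the sum of their weights is at least `t`. -/
def IsThresholdGraph {V : Type*} (G : SimpleGraph V) : Prop :=
  ∃ (w : V → ℝ) (t : ℝ), ∀ x y : V, x ≠ y → (G.Adj x y ↔ t ≤ w x + w y)

lemma rhoT_le_card {V : Type*} (G : SimpleGraph V) (ι : Type*) [Fintype ι] [Nonempty ι]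
    (g : V → ι → ℝ) (t : ℝ) (ht : 0 < t)
    (h : ∀ x y : V, x ≠ y → (G.Adj x y ↔ ∀ i, t ≤ g x i + g y i)) :
    rhoT G ≤ Fintype.card ι := by
  apply Nat.sInf_le
  refine ⟨Fintype.card_pos, ?_⟩
  let e := Fintype.equivFin ι
  refine ⟨fun x j => g x (e.symm j), t, ht, fun x y hxy => ?_⟩
  rw [h x y hxy]
  constructor
  · intro H j; exact H _
  · intro H i
    have := H (e i)
    simpa using this

/-- If `G` has `n ≥ 3` vertices and an induced subgraph on `k` vertices that is a
threshold graph, then `ρ_T(G) ≤ n − k + 1`. -/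
theorem stmt_13 {V : Type*} [Fintype V] (G : SimpleGraph V) (hn : 3 ≤ Fintype.card V)
    (s : Finset V) (hthr : IsThresholdGraph (G.induce (s : Set V))) :
    rhoT G ≤ Fintype.card V - s.card + 1 := by
  classical
  obtain ⟨w, t₀, hw⟩ := hthr
  have hne : Nonempty V := Fintype.card_pos_iff.mp (by omega)
  set w' : V → ℝ := fun x => if h : x ∈ s then w ⟨x, h⟩ + (1 - t₀) / 2 else 0 with hw'def
  have huniv : (Finset.univ : Finset V).Nonempty := Finset.univ_nonempty
  set M : ℝ := 1 + Finset.univ.sup' huniv (fun x => |w' x|) with hMdef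
  have hMw : ∀ x : V, (1 : ℝ) ≤ M + w' x := by
    intro x
    have h1 : |w' x| ≤ Finset.univ.sup' huniv (fun x => |w' x|) :=
      Finset.le_sup' (fun x => |w' x|) (Finset.mem_univ x)
    have h2 : -(w' x) ≤ |w' x| := neg_le_abs _
    simp only [hMdef]; linarith
  have hM1 : (1 : ℝ) ≤ M := by
    have := hMw (Classical.arbitrary V)
    have h1 : |w' (Classical.arbitrary V)| ≤ Finset.univ.sup' huniv (fun x => |w' x|) :=
      Finset.le_sup' (fun x => |w' x|) (Finset.mem_univ (Classical.arbitrary V))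
    have h2 : (0:ℝ) ≤ |w' (Classical.arbitrary V)| := abs_nonneg _
    simp only [hMdef]; linarith
  -- the representation
  set g : V → Option {v : V // v ∈ sᶜ} → ℝ := fun x o =>
    Option.elim o (if x ∈ s then w' x else M)
      (fun v => if x = (v : V) then (1:ℝ)/4 else if G.Adj x v then 1 else 1/2) with hgdef
  have key : ∀ x y : V, x ≠ y → (G.Adj x y ↔ ∀ i, (1:ℝ) ≤ g x i + g y i) := by
    intro x y hxy
    constructor
    · intro hadj i
      match i with
      | none =>
        simp only [hgdef, Option.elim]
        by_cases hx : x ∈ s <;> by_cases hy : y ∈ s <;> simp [hx, hy]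
        · -- both in s
          have hne' : (⟨x, hx⟩ : (s : Set V)) ≠ ⟨y, hy⟩ := by
            simp [Subtype.ext_iff]; exact hxy
          have h := (hw ⟨x, hx⟩ ⟨y, hy⟩ hne').mp (by simpa using hadj)
          simp only [hw'def, dif_pos hx, dif_pos hy]
          linarith
        · have := hMw x; simp only [hw'def, dif_pos hx] at this ⊢; linarith
        · have := hMw y; simp only [hw'def, dif_pos hy] at this ⊢; linarith
        · linarith
      | some v =>
        simp only [hgdef, Option.elim]
        by_cases hxv : x = (v : V)
        · have hyv : y ≠ (v : V) := fun h => hxy (hxv.trans h.symm)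
          have : G.Adj y (v : V) := hxv ▸ hadj.symm
          simp only [hxv, hyv, if_true, if_false, this, if_neg hyv, if_pos]
            <;> norm_num
        · by_cases hyv : y = (v : V)
          · have : G.Adj x (v : V) := hyv ▸ hadj
            simp only [hyv, if_true, this, if_neg hxv, if_pos]
              <;> norm_num
          · simp only [if_neg hxv, if_neg hyv]
            split_ifs <;> norm_num
    · intro H
      by_cases hx : x ∈ s
      · by_cases hy : y ∈ s
        · have h0 := H none
          simp only [hgdef, Option.elim, if_pos hx, if_pos hy, hw'def,
            dif_pos hx, dif_pos hy] at h0
          have hne' : (⟨x, hx⟩ : (s : Set V)) ≠ ⟨y, hy⟩ := by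
            simp [Subtype.ext_iff]; exact hxy
          have := (hw ⟨x, hx⟩ ⟨y, hy⟩ hne').mpr (by linarith)
          simpa using this
        · have hy' : y ∈ sᶜ := Finset.mem_compl.mpr hy
          have h0 := H (some ⟨y, hy'⟩)
          simp only [hgdef, Option.elim] at h0
          have hxv : x ≠ y := hxy
          simp only [if_true, if_neg hxv] at h0
          by_contra hna
          rw [if_neg hna] at h0
          norm_num at h0
      · have hx' : x ∈ sᶜ := Finset.mem_compl.mpr hx
        have h0 := H (some ⟨x, hx'⟩)
        simp only [hgdef, Option.elim] at h0
        simp only [if_true, if_neg (Ne.symm hxy)] at h0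
        by_contra hna
        have : ¬ G.Adj y x := fun h => hna h.symm
        rw [if_neg this] at h0
        norm_num at h0
  have hcard : Fintype.card (Option {v : V // v ∈ sᶜ}) = Fintype.card V - s.card + 1 := by
    rw [Fintype.card_option, Fintype.card_coe, Finset.card_compl]
  calc rhoT G ≤ Fintype.card (Option {v : V // v ∈ sᶜ}) :=
        rhoT_le_card G _ g 1 one_pos key
    _ = _ := hcard
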